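/- For f ∈ Lip₁(X) (bounded Lipschitz with ‖f‖_sup + Lip(f) ≤ 1) and any v ∈ Y, θ,θ' ∈ P(X), y,y' ∈ Y, under the assumptions r ≤ r̄, r Lipschitz with constant L_r, and r(λ,v,x,y) ≥ δ⁻¹, one has |∫ f dΦ(v,θ,y) − ∫ f dΦ(v,θ',y')| ≤ δ(r̄ + L_r)(1 + δ r̄)[d_P(θ,θ') + |y − y'|], where Φ(v,θ,y)(du) = r(u,v,θ,y)/r(λ,v,θ,y) λ(du). -/

import Mathlib

open MeasureTheory Set
noncomputable section

abbrev Em (m : ℕ) := EuclideanSpace ℝ (Fin m)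

/-- bounded Lipschitz functions with `‖f‖_sup + Lip f ≤ 1` -/
def IsLip1 {E : Type*} [PseudoMetricSpace E] (f : E → ℝ) : Prop :=
  ∃ C L : ℝ, 0 ≤ C ∧ 0 ≤ L ∧ (∀ x, |f x| ≤ C) ∧
    (∀ x y, |f x - f y| ≤ L * dist x y) ∧ C + L ≤ 1

/-- dual bounded-Lipschitz distance on probability measures -/
noncomputable def dP {E : Type*} [PseudoMetricSpace E] [MeasurableSpace E]
    (μ ν : Measure E) : ℝ :=
  ⨆ f : {f : E → ℝ // IsLip1 f}, (∫ x, f.1 x ∂μ - ∫ x, f.1 x ∂ν)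

namespace AuxStmt3

lemma isLip1_zero {E : Type*} [PseudoMetricSpace E] : IsLip1 (fun _ : E => (0:ℝ)) :=
  ⟨0, 0, le_refl _, le_refl _, fun _ => by simp, fun x y => by simp, by norm_num⟩

lemma lip1_abs_le_one {E : Type*} [PseudoMetricSpace E] {f : E → ℝ}
    (hf : IsLip1 f) (x : E) : |f x| ≤ 1 := by
  obtain ⟨C, L, hC, hL, hb, hlip, hsum⟩ := hf
  exact (hb x).trans (by linarith)

lemma lip1_continuous {E : Type*} [PseudoMetricSpace E] {f : E → ℝ}
    (hf : IsLip1 f) : Continuous f := by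
  obtain ⟨C, L, hC, hL, hb, hlip, hsum⟩ := hf
  refine (LipschitzWith.of_dist_le_mul (K := L.toNNReal) fun x y => ?_).continuous
  rw [Real.dist_eq, Real.coe_toNNReal L hL]
  exact hlip x y

lemma lip1_neg {E : Type*} [PseudoMetricSpace E] {f : E → ℝ}
    (hf : IsLip1 f) : IsLip1 (fun x => -(f x)) := by
  obtain ⟨C, L, hC, hL, hb, hlip, hsum⟩ := hf
  refine ⟨C, L, hC, hL, fun x => by simpa using hb x, fun x y => ?_, hsum⟩
  have := hlip x y
  rw [show -(f x) - -(f y) = -(f x - f y) by ring, abs_neg]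
  exact this

lemma lip1_integrable {m : ℕ} {f : Em m → ℝ} (hf : IsLip1 f)
    (μ : Measure (Em m)) [IsProbabilityMeasure μ] : Integrable f μ :=
  (integrable_const 1).mono' (lip1_continuous hf).aestronglyMeasurable
    (ae_of_all _ fun x => by simpa using lip1_abs_le_one hf x)

lemma lip1_abs_integral_le {m : ℕ} {f : Em m → ℝ} (hf : IsLip1 f)
    (μ : Measure (Em m)) [IsProbabilityMeasure μ] : |∫ x, f x ∂μ| ≤ 1 := by
  calc |∫ x, f x ∂μ| ≤ ∫ x, |f x| ∂μ := by
        simpa [Real.norm_eq_abs] using norm_integral_le_integral_norm f (μ := μ)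
    _ ≤ ∫ _x, (1:ℝ) ∂μ :=
        integral_mono (lip1_integrable hf μ).abs (integrable_const 1) fun x => lip1_abs_le_one hf x
    _ = 1 := by simp

lemma dP_bddAbove {m : ℕ} (θ θ' : Measure (Em m)) [IsProbabilityMeasure θ]
    [IsProbabilityMeasure θ'] :
    BddAbove (range fun f : {f : Em m → ℝ // IsLip1 f} =>
      ∫ x, f.1 x ∂θ - ∫ x, f.1 x ∂θ') := by
  refine ⟨2, ?_⟩
  rintro _ ⟨f, rfl⟩
  have h1 := lip1_abs_integral_le f.2 θ
  have h2 := lip1_abs_integral_le f.2 θ'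
  obtain ⟨h1l, h1r⟩ := abs_le.mp h1
  obtain ⟨h2l, h2r⟩ := abs_le.mp h2
  dsimp only
  linarith

lemma le_dP {m : ℕ} (θ θ' : Measure (Em m)) [IsProbabilityMeasure θ]
    [IsProbabilityMeasure θ'] {f : Em m → ℝ} (hf : IsLip1 f) :
    ∫ x, f x ∂θ - ∫ x, f x ∂θ' ≤ dP θ θ' :=
  le_ciSup (dP_bddAbove θ θ') (⟨f, hf⟩ : {f : Em m → ℝ // IsLip1 f})

lemma dP_nonneg {m : ℕ} (θ θ' : Measure (Em m)) [IsProbabilityMeasure θ]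
    [IsProbabilityMeasure θ'] : 0 ≤ dP θ θ' := by
  have := le_dP θ θ' (isLip1_zero (E := Em m))
  simpa using this

lemma abs_sub_le_dP {m : ℕ} (θ θ' : Measure (Em m)) [IsProbabilityMeasure θ]
    [IsProbabilityMeasure θ'] {f : Em m → ℝ} (hf : IsLip1 f) :
    |∫ x, f x ∂θ - ∫ x, f x ∂θ'| ≤ dP θ θ' := by
  rw [abs_sub_le_iff]
  constructor
  · exact le_dP θ θ' hf
  · have := le_dP θ θ' (lip1_neg hf)
    rw [integral_neg, integral_neg] at this
    linarith

/-- scaled version: bounded by `a`, Lipschitz with constant `b`. -/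
lemma abs_integral_sub_le_scaled {m : ℕ} (θ θ' : Measure (Em m)) [IsProbabilityMeasure θ]
    [IsProbabilityMeasure θ'] {f : Em m → ℝ} {a b : ℝ} (ha : 0 ≤ a) (hb : 0 ≤ b)
    (hab : 0 < a + b) (hfa : ∀ x, |f x| ≤ a)
    (hfb : ∀ x x', |f x - f x'| ≤ b * dist x x') :
    |∫ x, f x ∂θ - ∫ x, f x ∂θ'| ≤ (a + b) * dP θ θ' := by
  set g : Em m → ℝ := fun x => f x / (a + b) with hg
  have hgl : IsLip1 g := by
    refine ⟨a / (a+b), b / (a+b), by positivity, by positivity, fun x => ?_, fun x y => ?_, ?_⟩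
    · rw [hg]
      simp only [abs_div, abs_of_pos hab]
      exact div_le_div_of_nonneg_right (hfa x) hab.le |>.trans_eq rfl
    · rw [hg]
      simp only [div_sub_div_same, abs_div, abs_of_pos hab, div_mul_eq_mul_div]
      exact div_le_div_of_nonneg_right (hfb x y) hab.le
    · rw [← add_div, div_self hab.ne']
  have key := abs_sub_le_dP θ θ' hgl
  rw [hg] at key
  simp only [integral_div] at key
  rw [div_sub_div_same, abs_div, abs_of_pos hab, div_le_iff₀ hab] at key
  linarith [key]

end AuxStmt3

open AuxStmt3

theorem stmt_3 {m n : ℕ} (Lr δ rbar : ℝ) (hLr : 0 < Lr) (hδ : 0 < δ)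
    (r : Em m → Em n → Em m → Em n → ℝ)
    (lam : Measure (Em m)) [IsProbabilityMeasure lam]
    (hr_meas : Measurable fun p : (Em m × Em n) × Em m × Em n => r p.1.1 p.1.2 p.2.1 p.2.2)
    (hr_nonneg : ∀ u v x y, 0 ≤ r u v x y)
    (hr_bdd : ∀ u v x y, r u v x y ≤ rbar)
    (hr_lip : ∀ u u' v x x' y y',
      |r u v x y - r u' v x' y'| ≤ Lr * (dist u u' + dist x x' + dist y y'))
    (hlow : ∀ (v : Em n) (x : Em m) (y : Em n), δ⁻¹ ≤ ∫ u, r u v x y ∂lam) :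
    ∀ (f : Em m → ℝ), IsLip1 f →
    ∀ (v : Em n) (θ θ' : Measure (Em m)), IsProbabilityMeasure θ → IsProbabilityMeasure θ' →
    ∀ (y y' : Em n),
      |(∫ u, f u * ((∫ x, r u v x y ∂θ) / (∫ u', ∫ x, r u' v x y ∂θ ∂lam)) ∂lam) -
        ∫ u, f u * ((∫ x, r u v x y' ∂θ') / (∫ u', ∫ x, r u' v x y' ∂θ' ∂lam)) ∂lam|
        ≤ δ * (rbar + Lr) * (1 + δ * rbar) * (dP θ θ' + dist y y') := by
  intro f hf v θ θ' hθ hθ' y y'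
  haveI := hθ; haveI := hθ'
  have hrbar : (0:ℝ) ≤ rbar := le_trans (hr_nonneg 0 v 0 y) (hr_bdd 0 v 0 y)
  -- measurability of sections
  have hmeas_sec : ∀ (u : Em m) (y₀ : Em n), Measurable fun x => r u v x y₀ := by
    intro u y₀
    exact hr_meas.comp ((measurable_const.prodMk measurable_const).prodMk
      (measurable_id.prodMk measurable_const))
  have hint_sec : ∀ (u : Em m) (y₀ : Em n) (θ₀ : Measure (Em m)), IsProbabilityMeasure θ₀ →
      Integrable (fun x => r u v x y₀) θ₀ := by
    intro u y₀ θ₀ h₀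
    exact (integrable_const rbar).mono' (hmeas_sec u y₀).aestronglyMeasurable
      (ae_of_all _ fun x => by
        rw [Real.norm_eq_abs, abs_of_nonneg (hr_nonneg u v x y₀)]; exact hr_bdd u v x y₀)
  -- the kernel-averaged function G
  set g : Em m → ℝ := fun u => ∫ x, r u v x y ∂θ with hgdef
  set g' : Em m → ℝ := fun u => ∫ x, r u v x y' ∂θ' with hg'def
  -- Lipschitz property of such averages
  have hG_lip : ∀ (y₀ : Em n) (θ₀ : Measure (Em m)), IsProbabilityMeasure θ₀ →
      ∀ u u', |(∫ x, r u v x y₀ ∂θ₀) - ∫ x, r u' v x y₀ ∂θ₀| ≤ Lr * dist u u' := by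
    intro y₀ θ₀ h₀ u u'
    haveI := h₀
    rw [← integral_sub (hint_sec u y₀ θ₀ h₀) (hint_sec u' y₀ θ₀ h₀)]
    calc |∫ x, (r u v x y₀ - r u' v x y₀) ∂θ₀|
        ≤ ∫ x, |r u v x y₀ - r u' v x y₀| ∂θ₀ := by
          simpa [Real.norm_eq_abs] using
            norm_integral_le_integral_norm (fun x => r u v x y₀ - r u' v x y₀) (μ := θ₀)
      _ ≤ ∫ _x, Lr * dist u u' ∂θ₀ := by
          refine integral_mono ((hint_sec u y₀ θ₀ h₀).sub (hint_sec u' y₀ θ₀ h₀)).abs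
            (integrable_const _) fun x => ?_
          have := hr_lip u u' v x x y₀ y₀
          simpa [dist_self] using this
      _ = Lr * dist u u' := by simp
  have hg_cont : ∀ (y₀ : Em n) (θ₀ : Measure (Em m)), IsProbabilityMeasure θ₀ →
      Continuous fun u => ∫ x, r u v x y₀ ∂θ₀ := by
    intro y₀ θ₀ h₀
    refine (LipschitzWith.of_dist_le_mul (K := Lr.toNNReal) fun u u' => ?_).continuous
    rw [Real.dist_eq, Real.coe_toNNReal Lr hLr.le]
    exact hG_lip y₀ θ₀ h₀ u u'
  have hg_bdd : ∀ (y₀ : Em n) (θ₀ : Measure (Em m)), IsProbabilityMeasure θ₀ →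
      ∀ u, (0 ≤ ∫ x, r u v x y₀ ∂θ₀) ∧ (∫ x, r u v x y₀ ∂θ₀) ≤ rbar := by
    intro y₀ θ₀ h₀ u
    haveI := h₀
    constructor
    · exact integral_nonneg fun x => hr_nonneg u v x y₀
    · calc (∫ x, r u v x y₀ ∂θ₀) ≤ ∫ _x, rbar ∂θ₀ :=
          integral_mono (hint_sec u y₀ θ₀ h₀) (integrable_const _) fun x => hr_bdd u v x y₀
        _ = rbar := by simp
  have hg_int : ∀ (y₀ : Em n) (θ₀ : Measure (Em m)), IsProbabilityMeasure θ₀ →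
      Integrable (fun u => ∫ x, r u v x y₀ ∂θ₀) lam := by
    intro y₀ θ₀ h₀
    refine (integrable_const rbar).mono' (hg_cont y₀ θ₀ h₀).aestronglyMeasurable
      (ae_of_all _ fun u => ?_)
    rw [Real.norm_eq_abs, abs_of_nonneg (hg_bdd y₀ θ₀ h₀ u).1]
    exact (hg_bdd y₀ θ₀ h₀ u).2
  -- Z lower bounds via Fubini
  have hZ_low : ∀ (y₀ : Em n) (θ₀ : Measure (Em m)), IsProbabilityMeasure θ₀ →
      δ⁻¹ ≤ ∫ u, ∫ x, r u v x y₀ ∂θ₀ ∂lam := by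
    intro y₀ θ₀ h₀
    haveI := h₀
    have hpm : Measurable fun p : Em m × Em m => r p.1 v p.2 y₀ :=
      hr_meas.comp ((measurable_fst.prodMk measurable_const).prodMk
        (measurable_snd.prodMk measurable_const))
    have hprod : Integrable (fun p : Em m × Em m => r p.1 v p.2 y₀) (lam.prod θ₀) := by
      refine (integrable_const rbar).mono' hpm.aestronglyMeasurable (ae_of_all _ fun p => ?_)
      rw [Real.norm_eq_abs, abs_of_nonneg (hr_nonneg _ _ _ _)]
      exact hr_bdd _ _ _ _
    rw [show (∫ u, ∫ x, r u v x y₀ ∂θ₀ ∂lam) = ∫ x, ∫ u, r u v x y₀ ∂lam ∂θ₀ from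
      integral_integral_swap hprod]
    calc δ⁻¹ = ∫ _x, δ⁻¹ ∂θ₀ := by simp
      _ ≤ ∫ x, ∫ u, r u v x y₀ ∂lam ∂θ₀ := by
          refine integral_mono (integrable_const _) ?_ fun x => hlow v x y₀
          exact hprod.integral_prod_right
  set Z : ℝ := ∫ u, g u ∂lam with hZdef
  set Z' : ℝ := ∫ u, g' u ∂lam with hZ'def
  have hZlow : δ⁻¹ ≤ Z := hZ_low y θ hθ
  have hZ'low : δ⁻¹ ≤ Z' := hZ_low y' θ' hθ'
  have hZpos : 0 < Z := lt_of_lt_of_le (inv_pos.mpr hδ) hZlow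
  have hZ'pos : 0 < Z' := lt_of_lt_of_le (inv_pos.mpr hδ) hZ'low
  have hZinv : Z⁻¹ ≤ δ := by
    rw [inv_le_comm₀ hZpos hδ] at *
    exact hZlow
  have hZ'inv : Z'⁻¹ ≤ δ := by
    rw [inv_le_comm₀ hZ'pos hδ] at *
    exact hZ'low
  -- pointwise bound on |g - g'|
  set D : ℝ := (rbar + Lr) * (dP θ θ' + dist y y') with hDdef
  have hdPnn : 0 ≤ dP θ θ' := dP_nonneg θ θ'
  have hDnn : 0 ≤ D := by positivity
  have hgg' : ∀ u, |g u - g' u| ≤ D := by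
    intro u
    have h1 : |(∫ x, r u v x y ∂θ) - ∫ x, r u v x y ∂θ'| ≤ (rbar + Lr) * dP θ θ' := by
      refine abs_integral_sub_le_scaled θ θ' hrbar hLr.le (by positivity)
        (fun x => ?_) (fun x x' => ?_)
      · rw [abs_of_nonneg (hr_nonneg u v x y)]; exact hr_bdd u v x y
      · have := hr_lip u u v x x' y y
        simpa [dist_self] using this
    have h2 : |(∫ x, r u v x y ∂θ') - ∫ x, r u v x y' ∂θ'| ≤ Lr * dist y y' := by
      rw [← integral_sub (hint_sec u y θ' hθ') (hint_sec u y' θ' hθ')]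
      calc |∫ x, (r u v x y - r u v x y') ∂θ'|
          ≤ ∫ x, |r u v x y - r u v x y'| ∂θ' := by
            simpa [Real.norm_eq_abs] using
              norm_integral_le_integral_norm (fun x => r u v x y - r u v x y') (μ := θ')
        _ ≤ ∫ _x, Lr * dist y y' ∂θ' := by
            refine integral_mono ((hint_sec u y θ' hθ').sub (hint_sec u y' θ' hθ')).abs
              (integrable_const _) fun x => ?_
            have := hr_lip u u v x x y y'
            simpa [dist_self] using this
        _ = Lr * dist y y' := by simp
    have : |g u - g' u| ≤ (rbar + Lr) * dP θ θ' + Lr * dist y y' := by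
      have := abs_sub_le (g u) (∫ x, r u v x y ∂θ') (g' u)
      simp only [hgdef, hg'def] at *
      linarith
    refine this.trans ?_
    have : Lr * dist y y' ≤ (rbar + Lr) * dist y y' :=
      mul_le_mul_of_nonneg_right (by linarith) dist_nonneg
    rw [hDdef]; ring_nf; nlinarith [dist_nonneg (x := y) (y := y')]
  -- integrability of f * g
  have hfg_int : ∀ (y₀ : Em n) (θ₀ : Measure (Em m)), IsProbabilityMeasure θ₀ →
      Integrable (fun u => f u * ∫ x, r u v x y₀ ∂θ₀) lam := by
    intro y₀ θ₀ h₀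
    refine (integrable_const rbar).mono'
      ((lip1_continuous hf).aestronglyMeasurable.mul (hg_cont y₀ θ₀ h₀).aestronglyMeasurable)
      (ae_of_all _ fun u => ?_)
    rw [Real.norm_eq_abs, abs_mul]
    calc |f u| * |∫ x, r u v x y₀ ∂θ₀| ≤ 1 * rbar := by
          refine mul_le_mul (lip1_abs_le_one hf u) ?_ (abs_nonneg _) zero_le_one
          rw [abs_of_nonneg (hg_bdd y₀ θ₀ h₀ u).1]; exact (hg_bdd y₀ θ₀ h₀ u).2
      _ = rbar := one_mul _
  set A : ℝ := ∫ u, f u * g u ∂lam with hAdef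
  set A' : ℝ := ∫ u, f u * g' u ∂lam with hA'def
  -- rewrite LHS
  have hLHS : (∫ u, f u * (g u / Z) ∂lam) = A / Z := by
    simp only [← mul_div_assoc]
    rw [integral_div, ← hAdef]
  have hLHS' : (∫ u, f u * (g' u / Z') ∂lam) = A' / Z' := by
    simp only [← mul_div_assoc]
    rw [integral_div, ← hA'def]
  have hAA' : |A - A'| ≤ D := by
    rw [hAdef, hA'def, ← integral_sub (hfg_int y θ hθ) (hfg_int y' θ' hθ')]
    calc |∫ u, (f u * g u - f u * g' u) ∂lam|
        ≤ ∫ u, |f u * g u - f u * g' u| ∂lam := by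
          simpa [Real.norm_eq_abs] using
            norm_integral_le_integral_norm (fun u => f u * g u - f u * g' u) (μ := lam)
      _ ≤ ∫ _u, D ∂lam := by
          refine integral_mono ((hfg_int y θ hθ).sub (hfg_int y' θ' hθ')).abs
            (integrable_const _) fun u => ?_
          rw [← mul_sub, abs_mul]
          calc |f u| * |g u - g' u| ≤ 1 * D :=
              mul_le_mul (lip1_abs_le_one hf u) (hgg' u) (abs_nonneg _) zero_le_one
            _ = D := one_mul _
      _ = D := by simp
  have hZZ' : |Z - Z'| ≤ D := by
    rw [hZdef, hZ'def, ← integral_sub (hg_int y θ hθ) (hg_int y' θ' hθ')]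
    calc |∫ u, (g u - g' u) ∂lam|
        ≤ ∫ u, |g u - g' u| ∂lam := by
          simpa [Real.norm_eq_abs] using
            norm_integral_le_integral_norm (fun u => g u - g' u) (μ := lam)
      _ ≤ ∫ _u, D ∂lam :=
          integral_mono ((hg_int y θ hθ).sub (hg_int y' θ' hθ')).abs
            (integrable_const _) fun u => hgg' u
      _ = D := by simp
  have hA'bdd : |A'| ≤ rbar := by
    rw [hA'def]
    calc |∫ u, f u * g' u ∂lam| ≤ ∫ u, |f u * g' u| ∂lam := by
          simpa only [Real.norm_eq_abs] using
            norm_integral_le_integral_norm (fun u => f u * g' u) (μ := lam)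
      _ ≤ ∫ _u, rbar ∂lam := by
          refine integral_mono (hfg_int y' θ' hθ').abs (integrable_const _) fun u => ?_
          rw [abs_mul]
          calc |f u| * |g' u| ≤ 1 * rbar := by
                refine mul_le_mul (lip1_abs_le_one hf u) ?_ (abs_nonneg _) zero_le_one
                rw [abs_of_nonneg (hg_bdd y' θ' hθ' u).1]; exact (hg_bdd y' θ' hθ' u).2
            _ = rbar := one_mul _
      _ = rbar := by simp
  rw [hLHS, hLHS']
  have hdecomp : A / Z - A' / Z' = (A - A') / Z + A' * (Z' - Z) / (Z * Z') := by
    field_simp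
    ring
  rw [hdecomp]
  have hb1 : |(A - A') / Z| ≤ D * δ := by
    rw [abs_div, abs_of_pos hZpos, div_le_iff₀ hZpos]
    calc |A - A'| ≤ D := hAA'
      _ = D * (δ * δ⁻¹) := by rw [mul_inv_cancel₀ hδ.ne', mul_one]
      _ ≤ D * (δ * Z) := by
          refine mul_le_mul_of_nonneg_left ?_ hDnn
          exact mul_le_mul_of_nonneg_left hZlow hδ.le
      _ = D * δ * Z := by ring
  have hb2 : |A' * (Z' - Z) / (Z * Z')| ≤ rbar * D * (δ * δ) := by
    rw [abs_div, abs_mul, abs_of_pos (mul_pos hZpos hZ'pos), div_le_iff₀ (mul_pos hZpos hZ'pos)]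
    have h1 : |A'| * |Z' - Z| ≤ rbar * D := by
      refine mul_le_mul hA'bdd ?_ (abs_nonneg _) hrbar
      rw [abs_sub_comm]; exact hZZ'
    calc |A'| * |Z' - Z| ≤ rbar * D := h1
      _ = rbar * D * ((δ * δ⁻¹) * (δ * δ⁻¹)) := by
          rw [mul_inv_cancel₀ hδ.ne']; ring
      _ ≤ rbar * D * ((δ * Z) * (δ * Z')) := by
          refine mul_le_mul_of_nonneg_left ?_ (by positivity)
          refine mul_le_mul (mul_le_mul_of_nonneg_left hZlow hδ.le)
            (mul_le_mul_of_nonneg_left hZ'low hδ.le) (by positivity) (by positivity)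
      _ = rbar * D * (δ * δ) * (Z * Z') := by ring
  calc |(A - A') / Z + A' * (Z' - Z) / (Z * Z')|
      ≤ |(A - A') / Z| + |A' * (Z' - Z) / (Z * Z')| := abs_add_le _ _
    _ ≤ D * δ + rbar * D * (δ * δ) := add_le_add hb1 hb2
    _ = δ * (rbar + Lr) * (1 + δ * rbar) * (dP θ θ' + dist y y') := by
        rw [hDdef]; ring
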